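/- arXiv:1007.1486 — 2 statements merged into one kernel-verified Lean document; each statement's English description precedes it below -/
import Mathlib

section
/- Let T, T̂ : M → M be measurable maps on a compact metric measure space (M, ν), ρ ∈ L¹(M,ν) positive, and C a countable dense subset of C(M). If for all f, g ∈ C, ∫_M f(T̂(x)) g(x) ν(dx) = ∫_M f(x) g(T(x)) ρ(x) ν(dx), then T̂ is a ν-a.e. inverse of T (T^{-1} = T̂ ν-a.e.), and the image measures satisfy ν ∘ T^{-1} = ρ ν and ν ∘ T = ρ^{-1}(T^{-1}) ν. -/
open MeasureTheory BoundedContinuousFunction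
open scoped NNReal ENNReal

lemma cont_integral_aux {M : Type*} [MetricSpace M] [CompactSpace M] [MeasurableSpace M]
    [BorelSpace M] (ν : Measure M) [IsFiniteMeasure ν] (w : M → ℝ) (hw : Integrable w ν)
    (u : M → M) (hu : Measurable u) :
    Continuous (fun f : C(M, ℝ) => ∫ x, f (u x) * w x ∂ν) := by
  have hint : ∀ f : C(M, ℝ), Integrable (fun x => f (u x) * w x) ν := fun f =>
    hw.bdd_mul ((f.continuous.measurable.comp hu).aestronglyMeasurable)
      (c := ‖f‖) (Filter.Eventually.of_forall fun x => f.norm_coe_le_norm (u x))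
  refine LipschitzWith.continuous (K := (∫ x, |w x| ∂ν).toNNReal) ?_
  rw [lipschitzWith_iff_dist_le_mul]
  intro f f'
  rw [Real.dist_eq, ← integral_sub (hint f) (hint f')]
  have key : |∫ x, (f (u x) * w x - f' (u x) * w x) ∂ν| ≤ dist f f' * ∫ x, |w x| ∂ν := by
    calc |∫ x, (f (u x) * w x - f' (u x) * w x) ∂ν|
        ≤ ∫ x, |f (u x) * w x - f' (u x) * w x| ∂ν := by
          simpa [Real.norm_eq_abs] using
            norm_integral_le_integral_norm (fun x => f (u x) * w x - f' (u x) * w x) (μ := ν)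
      _ ≤ ∫ x, dist f f' * |w x| ∂ν := by
          refine integral_mono ((hint f).sub (hint f')).abs (hw.abs.const_mul _) ?_
          intro x
          show |f (u x) * w x - f' (u x) * w x| ≤ dist f f' * |w x|
          have h1 : f (u x) * w x - f' (u x) * w x = (f (u x) - f' (u x)) * w x := by ring
          rw [h1, abs_mul]
          have hdist : |f (u x) - f' (u x)| ≤ dist f f' := by
            simpa [Real.dist_eq] using ContinuousMap.dist_apply_le_dist (f := f) (g := f') (u x)
          exact mul_le_mul_of_nonneg_right hdist (abs_nonneg _)
      _ = dist f f' * ∫ x, |w x| ∂ν := integral_const_mul _ _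
  refine key.trans (le_of_eq ?_)
  rw [Real.coe_toNNReal _ (integral_nonneg fun x => abs_nonneg _), mul_comm]


lemma ae_eq_id_of_measure_inter {M : Type*} [MetricSpace M] [CompactSpace M]
    [MeasurableSpace M] [BorelSpace M] (m : Measure M) (R : M → M) (hR : Measurable R)
    (h : ∀ E G : Set M, MeasurableSet E → MeasurableSet G →
      m (R ⁻¹' E ∩ G) = m (E ∩ G)) : ∀ᵐ x ∂m, R x = x := by
  have h0 : ∀ E : Set M, MeasurableSet E → ∀ᵐ x ∂m, (R x ∈ E ↔ x ∈ E) := by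
    intro E hE
    have h1 : m (R ⁻¹' E \ E) = 0 := by
      have h' := h E (R ⁻¹' E \ E) hE ((hR hE).diff hE)
      have e1 : R ⁻¹' E ∩ (R ⁻¹' E \ E) = R ⁻¹' E \ E :=
        Set.inter_eq_self_of_subset_right Set.diff_subset
      have e2 : E ∩ (R ⁻¹' E \ E) = ∅ := by
        ext x; simp only [Set.mem_inter_iff, Set.mem_diff, Set.mem_empty_iff_false,
          Set.mem_preimage, iff_false]; tauto
      rw [e1, e2] at h'
      simpa using h'
    have h2 : m (E \ R ⁻¹' E) = 0 := by
      have h' := h E (E \ R ⁻¹' E) hE (hE.diff (hR hE))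
      have e1 : R ⁻¹' E ∩ (E \ R ⁻¹' E) = ∅ := by
        ext x; simp only [Set.mem_inter_iff, Set.mem_diff, Set.mem_empty_iff_false,
          Set.mem_preimage, iff_false]; tauto
      have e2 : E ∩ (E \ R ⁻¹' E) = E \ R ⁻¹' E :=
        Set.inter_eq_self_of_subset_right Set.diff_subset
      rw [e1, e2] at h'
      simpa using h'.symm
    have hsub : {x | ¬(R x ∈ E ↔ x ∈ E)} ⊆ (R ⁻¹' E \ E) ∪ (E \ R ⁻¹' E) := by
      intro x hx
      simp only [Set.mem_setOf_eq] at hx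
      simp only [Set.mem_union, Set.mem_diff, Set.mem_preimage]
      tauto
    exact measure_mono_null hsub (measure_union_null h1 h2)
  obtain ⟨D, hDcount, hDdense⟩ := TopologicalSpace.exists_countable_dense M
  have key : ∀ᵐ x ∂m, ∀ y ∈ D, ∀ r : ℚ,
      (R x ∈ Metric.ball y (r : ℝ) ↔ x ∈ Metric.ball y (r : ℝ)) := by
    rw [MeasureTheory.ae_ball_iff hDcount]
    intro y _
    rw [MeasureTheory.ae_all_iff]
    intro r
    exact h0 _ Metric.isOpen_ball.measurableSet
  filter_upwards [key] with x hx
  by_contra hne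
  have hd : 0 < dist (R x) x := dist_pos.mpr hne
  obtain ⟨y, hyball, hyD⟩ :=
    Metric.dense_iff.1 hDdense x (dist (R x) x / 3) (by positivity)
  have hdyx : dist y x < dist (R x) x / 3 := Metric.mem_ball.1 hyball
  obtain ⟨r, hr1, hr2⟩ := exists_rat_btwn
    (show dist (R x) x / 3 < 2 * dist (R x) x / 3 by linarith)
  have hx_in : x ∈ Metric.ball y (r : ℝ) := by
    rw [Metric.mem_ball, dist_comm]
    linarith
  have hRx_in : R x ∈ Metric.ball y (r : ℝ) := (hx y hyD r).mpr hx_in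
  rw [Metric.mem_ball] at hRx_in
  have htri : dist (R x) x ≤ dist (R x) y + dist y x := dist_triangle _ _ _
  linarith

/-- If `∫ f(T̂ x) g(x) dν = ∫ f(x) g(T x) ρ(x) dν` for all `f, g` in a countable dense
subset of `C(M)`, then `T̂` is a `ν`-a.e. inverse of `T`, and
`ν ∘ T⁻¹ = ρ ν`, `ν ∘ T = ρ⁻¹(T⁻¹) ν`. -/
theorem ae_inverse_of_duality {M : Type*} [MetricSpace M] [CompactSpace M]
    [MeasurableSpace M] [BorelSpace M]
    (ν : Measure M) [IsFiniteMeasure ν]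
    (T T' : M → M) (hT : Measurable T) (hT' : Measurable T')
    (ρ : M → ℝ) (hρmeas : Measurable ρ) (hρpos : ∀ x, 0 < ρ x)
    (hρint : Integrable ρ ν)
    (S : Set C(M, ℝ)) (hScount : S.Countable) (hSdense : Dense S)
    (hdual : ∀ f ∈ S, ∀ g ∈ S,
      ∫ x, f (T' x) * g x ∂ν = ∫ x, f x * g (T x) * ρ x ∂ν) :
    (∀ᵐ x ∂ν, T (T' x) = x) ∧ (∀ᵐ x ∂ν, T' (T x) = x) ∧
      ν.map T' = ν.withDensity (fun x => ENNReal.ofReal (ρ x)) ∧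
      ν.map T = ν.withDensity (fun x => ENNReal.ofReal (ρ (T' x))⁻¹) := by
  have hdualC : ∀ f g : C(M, ℝ),
      ∫ x, f (T' x) * g x ∂ν = ∫ x, f x * g (T x) * ρ x ∂ν := by

    have hcInt : ∀ g : C(M, ℝ), Integrable (fun x => g x) ν := fun g =>
      ⟨g.continuous.measurable.aestronglyMeasurable,
        HasFiniteIntegral.of_bounded (C := ‖g‖) (Filter.Eventually.of_forall fun x => g.norm_coe_le_norm x)⟩
    have hgTρInt : ∀ g : C(M, ℝ), Integrable (fun x => g (T x) * ρ x) ν := fun g =>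
      hρint.bdd_mul ((g.continuous.measurable.comp hT).aestronglyMeasurable)
        (c := ‖g‖) (Filter.Eventually.of_forall fun x => g.norm_coe_le_norm (T x))
    have hfρInt : ∀ f : C(M, ℝ), Integrable (fun x => f x * ρ x) ν := fun f =>
      hρint.bdd_mul (f.continuous.measurable.aestronglyMeasurable)
        (c := ‖f‖) (Filter.Eventually.of_forall fun x => f.norm_coe_le_norm x)
    have hC1 : ∀ g ∈ S, ∀ f : C(M, ℝ),
        ∫ x, f (T' x) * g x ∂ν = ∫ x, f x * g (T x) * ρ x ∂ν := by
      intro g hg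
      have h1 : Continuous (fun f : C(M, ℝ) => ∫ x, f (T' x) * g x ∂ν) :=
        cont_integral_aux ν (fun x => g x) (hcInt g) T' hT'
      have h2 : Continuous (fun f : C(M, ℝ) => ∫ x, f x * g (T x) * ρ x ∂ν) := by
        have h2' := cont_integral_aux ν (fun x => g (T x) * ρ x) (hgTρInt g) id measurable_id
        have heq : (fun f : C(M, ℝ) => ∫ x, f (id x) * (g (T x) * ρ x) ∂ν)
            = fun f : C(M, ℝ) => ∫ x, f x * g (T x) * ρ x ∂ν :=
          funext fun f => integral_congr_ae (Filter.Eventually.of_forall fun x => by simp [mul_assoc])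
        rwa [heq] at h2'
      exact fun f => congrFun (Continuous.ext_on hSdense h1 h2 fun f' hf' => hdual f' hf' g hg) f
    intro f
    have h1 : Continuous (fun g : C(M, ℝ) => ∫ x, f (T' x) * g x ∂ν) := by
      have h1' := cont_integral_aux ν (fun x => f (T' x))
        ⟨(f.continuous.measurable.comp hT').aestronglyMeasurable,
          HasFiniteIntegral.of_bounded (C := ‖f‖)
            (Filter.Eventually.of_forall fun x => f.norm_coe_le_norm (T' x))⟩ id measurable_id
      have heq : (fun g : C(M, ℝ) => ∫ x, g (id x) * f (T' x) ∂ν)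
          = fun g : C(M, ℝ) => ∫ x, f (T' x) * g x ∂ν :=
        funext fun g => integral_congr_ae (Filter.Eventually.of_forall fun x => by
          simp [mul_comm])
      rwa [heq] at h1'
    have h2 : Continuous (fun g : C(M, ℝ) => ∫ x, f x * g (T x) * ρ x ∂ν) := by
      have h2' := cont_integral_aux ν (fun x => f x * ρ x) (hfρInt f) T hT
      have heq : (fun g : C(M, ℝ) => ∫ x, g (T x) * (f x * ρ x) ∂ν)
          = fun g : C(M, ℝ) => ∫ x, f x * g (T x) * ρ x ∂ν :=
        funext fun g => integral_congr_ae (Filter.Eventually.of_forall fun x => by ring_nf)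
      rwa [heq] at h2'
    exact fun g => congrFun (Continuous.ext_on hSdense h1 h2 fun g' hg' => hC1 g' hg' f) g
  have hE1 : ∀ g : M →ᵇ ℝ≥0, (ν.withDensity fun x => (g x : ℝ≥0∞)).map T'
      = ν.withDensity fun x => (g (T x) : ℝ≥0∞) * ENNReal.ofReal (ρ x) := by

    intro g
    set gR : C(M, ℝ) := ⟨fun x => (g x : ℝ), NNReal.continuous_coe.comp g.continuous⟩ with hgR
    have hgmeas : Measurable fun x => (g x : ℝ≥0∞) :=
      (measurable_coe_nnreal_ennreal.comp g.continuous.measurable)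
    haveI : IsFiniteMeasure (ν.withDensity fun x => (g x : ℝ≥0∞)) :=
      isFiniteMeasure_withDensity (g.lintegral_lt_top_of_nnreal ν).ne
    apply ext_of_forall_lintegral_eq_of_IsFiniteMeasure
    intro f
    set fR : C(M, ℝ) := ⟨fun x => (f x : ℝ), NNReal.continuous_coe.comp f.continuous⟩ with hfR
    have hfmeas : Measurable fun x => (f x : ℝ≥0∞) :=
      (measurable_coe_nnreal_ennreal.comp f.continuous.measurable)
    have hint1 : Integrable (fun x => fR (T' x) * gR x) ν :=
      ⟨((fR.continuous.measurable.comp hT').mul gR.continuous.measurable).aestronglyMeasurable,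
        HasFiniteIntegral.of_bounded (C := ‖fR‖ * ‖gR‖) (Filter.Eventually.of_forall fun x => by
          rw [Real.norm_eq_abs, abs_mul]
          exact mul_le_mul (fR.norm_coe_le_norm (T' x)) (gR.norm_coe_le_norm x) (abs_nonneg _)
            (norm_nonneg _))⟩
    have hint2 : Integrable (fun x => fR x * gR (T x) * ρ x) ν := by
      have := hρint.bdd_mul ((fR.continuous.measurable.mul
          (gR.continuous.measurable.comp hT)).aestronglyMeasurable)
        (c := ‖fR‖ * ‖gR‖) (Filter.Eventually.of_forall fun x => by
          rw [Real.norm_eq_abs, Pi.mul_apply, Function.comp_apply, abs_mul]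
          exact mul_le_mul (fR.norm_coe_le_norm x) (gR.norm_coe_le_norm (T x)) (abs_nonneg _)
            (norm_nonneg _))
      simpa [mul_assoc] using this
    have hfT' : Measurable fun a => (f (T' a) : ℝ≥0∞) := hfmeas.comp hT'
    have hgT : Measurable fun x => (g (T x) : ℝ≥0∞) * ENNReal.ofReal (ρ x) :=
      (measurable_coe_nnreal_ennreal.comp (g.continuous.measurable.comp hT)).mul
        hρmeas.ennreal_ofReal
    calc ∫⁻ x, f x ∂((ν.withDensity fun x => (g x : ℝ≥0∞)).map T')
        = ∫⁻ x, (g x : ℝ≥0∞) * (f (T' x) : ℝ≥0∞) ∂ν := by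
          rw [lintegral_map hfmeas hT', lintegral_withDensity_eq_lintegral_mul ν hgmeas hfT']
          rfl
      _ = ∫⁻ x, ENNReal.ofReal (fR (T' x) * gR x) ∂ν := by
          refine lintegral_congr fun x => ?_
          simp [hfR, hgR, ENNReal.ofReal_mul, mul_comm]
      _ = ENNReal.ofReal (∫ x, fR (T' x) * gR x ∂ν) :=
          (ofReal_integral_eq_lintegral_ofReal hint1 (Filter.Eventually.of_forall fun x =>
            mul_nonneg (f (T' x)).2 (g x).2)).symm
      _ = ENNReal.ofReal (∫ x, fR x * gR (T x) * ρ x ∂ν) := by rw [hdualC fR gR]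
      _ = ∫⁻ x, ENNReal.ofReal (fR x * gR (T x) * ρ x) ∂ν :=
          ofReal_integral_eq_lintegral_ofReal hint2 (Filter.Eventually.of_forall fun x =>
            mul_nonneg (mul_nonneg (f x).2 (g (T x)).2) (hρpos x).le)
      _ = ∫⁻ x, ((g (T x) : ℝ≥0∞) * ENNReal.ofReal (ρ x)) * (f x : ℝ≥0∞) ∂ν := by
          refine lintegral_congr fun x => ?_
          simp only [hfR, hgR, ContinuousMap.coe_mk]
          rw [ENNReal.ofReal_mul (mul_nonneg (f x).coe_nonneg (g (T x)).coe_nonneg), ENNReal.ofReal_mul (f x).coe_nonneg]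
          simp only [ENNReal.ofReal_coe_nnreal]
          ring
      _ = ∫⁻ x, f x ∂(ν.withDensity fun x => (g (T x) : ℝ≥0∞) * ENNReal.ofReal (ρ x)) := by
          rw [lintegral_withDensity_eq_lintegral_mul ν hgT hfmeas]
          rfl

  set ρ' : M → ℝ≥0∞ := fun x => ENNReal.ofReal (ρ x) with hρ'
  have hρ'meas : Measurable ρ' := hρmeas.ennreal_ofReal
  set μ : Measure M := ν.withDensity ρ' with hμ
  haveI hμfin : IsFiniteMeasure μ := isFiniteMeasure_withDensity hρint.lintegral_lt_top.ne
  -- A : ν.map T' = μ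
  have hA : ν.map T' = μ := by
    have := hE1 1
    simpa [withDensity_one] using this
  -- EF
  have hEF : ∀ φ : M → ℝ≥0∞, Measurable φ → (∀ x, φ x ≤ 1) →
      ν.withDensity (fun x => φ (T' x)) = (μ.withDensity φ).map T := by
    intro φ hφ hφle
    have hφT' : Measurable fun x => φ (T' x) := hφ.comp hT'
    haveI : IsFiniteMeasure (ν.withDensity fun x => φ (T' x)) := by
      refine isFiniteMeasure_withDensity ?_
      refine ne_top_of_le_ne_top ?_ (lintegral_mono fun x => hφle (T' x))
      simp [measure_ne_top]
    apply ext_of_forall_lintegral_eq_of_IsFiniteMeasure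
    intro f
    have hfmeas : Measurable fun x => (f x : ℝ≥0∞) :=
      measurable_coe_nnreal_ennreal.comp f.continuous.measurable
    have hfT : Measurable fun x => (f (T x) : ℝ≥0∞) := hfmeas.comp hT
    have key := congrArg (fun m : Measure M => ∫⁻ x, φ x ∂m) (hE1 f)
    have hgT : Measurable fun x => (f (T x) : ℝ≥0∞) * ρ' x := hfT.mul hρ'meas
    rw [lintegral_map hφ hT', lintegral_withDensity_eq_lintegral_mul ν hfmeas hφT',
      lintegral_withDensity_eq_lintegral_mul ν hgT hφ] at key
    have hL : ∫⁻ x, f x ∂(ν.withDensity fun x => φ (T' x))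
        = ∫⁻ x, (f x : ℝ≥0∞) * φ (T' x) ∂ν := by
      rw [lintegral_withDensity_eq_lintegral_mul ν hφT' hfmeas]
      exact lintegral_congr fun x => mul_comm _ _
    have hR : ∫⁻ x, f x ∂((μ.withDensity φ).map T)
        = ∫⁻ x, ((f (T x) : ℝ≥0∞) * ρ' x) * φ x ∂ν := by
      rw [lintegral_map hfmeas hT, lintegral_withDensity_eq_lintegral_mul μ hφ hfT]
      simp only [Pi.mul_apply]
      rw [hμ, lintegral_withDensity_eq_lintegral_mul ν hρ'meas
        (g := fun a => φ a * (f (T a) : ℝ≥0∞)) (hφ.mul hfT)]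
      refine lintegral_congr fun x => ?_
      simp only [Pi.mul_apply]
      ring
    simp only [Pi.mul_apply] at key
    rw [hL, hR]
    exact key
  -- B : μ.map T = ν
  have hB : μ.map T = ν := by
    have := hEF (fun _ => 1) measurable_const (fun _ => le_rfl)
    simp only [withDensity_one] at this
    have h1 : (fun (_ : M) => (1:ℝ≥0∞)) = (1 : M → ℝ≥0∞) := rfl
    rw [h1, withDensity_one, withDensity_one] at this
    exact this.symm
  have hle1 : ∀ (s : Set M) (x : M), s.indicator (fun _ => (1:ℝ≥0∞)) x ≤ 1 := by
    intro s x
    classical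
    by_cases hx : x ∈ s <;> simp [hx]
  -- invariance for R = T ∘ T' wrt ν
  have hinv1 : ∀ E G : Set M, MeasurableSet E → MeasurableSet G →
      ν ((fun x => T (T' x)) ⁻¹' E ∩ G) = ν (E ∩ G) := by
    intro E G hE hG
    have hφ : Measurable ((T ⁻¹' E).indicator (fun _ => (1:ℝ≥0∞))) :=
      measurable_const.indicator (hT hE)
    have hEF' := hEF _ hφ (hle1 _)
    have hLHS := congrArg (fun m : Measure M => m G) hEF'
    have e1 : (ν.withDensity fun x => (T ⁻¹' E).indicator (fun _ => (1:ℝ≥0∞)) (T' x)) G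
        = ν ((fun x => T (T' x)) ⁻¹' E ∩ G) := by
      have : (fun x => (T ⁻¹' E).indicator (fun _ => (1:ℝ≥0∞)) (T' x))
          = ((fun x => T (T' x)) ⁻¹' E).indicator (fun _ => (1:ℝ≥0∞)) := by
        funext x
        by_cases hx : T (T' x) ∈ E <;> simp [Set.indicator_apply, hx]
      have hRmeas : MeasurableSet ((fun x => T (T' x)) ⁻¹' E) := (hT.comp hT') hE
      have hone : (fun _ : M => (1:ℝ≥0∞)) = 1 := rfl
      rw [this, withDensity_indicator hRmeas, hone, withDensity_one,
        Measure.restrict_apply hG, Set.inter_comm]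
    have e2 : ((μ.withDensity ((T ⁻¹' E).indicator (fun _ => (1:ℝ≥0∞)))).map T) G
        = ν (E ∩ G) := by
      have hone : (fun _ : M => (1:ℝ≥0∞)) = 1 := rfl
      rw [Measure.map_apply hT hG, withDensity_indicator (hT hE), hone, withDensity_one,
        Measure.restrict_apply (hT hG)]
      have : T ⁻¹' G ∩ T ⁻¹' E = T ⁻¹' (E ∩ G) := by
        rw [← Set.preimage_inter, Set.inter_comm]
      rw [this, ← Measure.map_apply hT (hE.inter hG), hB]
    rw [e1, e2] at hLHS
    exact hLHS
  -- invariance for R' = T' ∘ T wrt μ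
  have hinv2 : ∀ E G : Set M, MeasurableSet E → MeasurableSet G →
      μ ((fun x => T' (T x)) ⁻¹' E ∩ G) = μ (E ∩ G) := by
    intro E G hE hG
    have hφ : Measurable (G.indicator (fun _ => (1:ℝ≥0∞))) := measurable_const.indicator hG
    have hEF' := hEF _ hφ (hle1 _)
    have hLHS := congrArg (fun m : Measure M => m (T' ⁻¹' E)) hEF'
    have e1 : (ν.withDensity fun x => G.indicator (fun _ => (1:ℝ≥0∞)) (T' x)) (T' ⁻¹' E)
        = μ (E ∩ G) := by
      have : (fun x => G.indicator (fun _ => (1:ℝ≥0∞)) (T' x))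
          = (T' ⁻¹' G).indicator (fun _ => (1:ℝ≥0∞)) := by
        funext x
        by_cases hx : T' x ∈ G <;> simp [Set.indicator_apply, hx]
      have hone : (fun _ : M => (1:ℝ≥0∞)) = 1 := rfl
      rw [this, withDensity_indicator (hT' hG), hone, withDensity_one,
        Measure.restrict_apply (hT' hE), ← Set.preimage_inter,
        ← Measure.map_apply hT' (hE.inter hG), hA]
    have e2 : ((μ.withDensity (G.indicator (fun _ => (1:ℝ≥0∞)))).map T) (T' ⁻¹' E)
        = μ ((fun x => T' (T x)) ⁻¹' E ∩ G) := by
      have hone : (fun _ : M => (1:ℝ≥0∞)) = 1 := rfl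
      rw [Measure.map_apply hT (hT' hE), withDensity_indicator hG, hone, withDensity_one,
        Measure.restrict_apply (hT (hT' hE))]
      rfl
    rw [e1, e2] at hLHS
    exact hLHS.symm
  -- a.e. statements
  have goal1 : ∀ᵐ x ∂ν, T (T' x) = x :=
    ae_eq_id_of_measure_inter ν _ (hT.comp hT') hinv1
  have goal2μ : ∀ᵐ x ∂μ, T' (T x) = x :=
    ae_eq_id_of_measure_inter μ _ (hT'.comp hT) hinv2
  have hνμ : ν ≪ μ := by
    have hρ'ne0 : ∀ᵐ x ∂ν, ρ' x ≠ 0 := Filter.Eventually.of_forall fun x => by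
      exact (ENNReal.ofReal_pos.mpr (hρpos x)).ne'
    have hρ'netop : ∀ᵐ x ∂ν, ρ' x ≠ ⊤ := Filter.Eventually.of_forall fun x => by
      simp [hρ']
    have : (μ.withDensity fun x => (ρ' x)⁻¹) = ν := withDensity_inv_same hρ'meas hρ'ne0 hρ'netop
    rw [← this]
    exact withDensity_absolutelyContinuous _ _
  have goal2 : ∀ᵐ x ∂ν, T' (T x) = x := hνμ.ae_le goal2μ
  -- goal 4
  have goal4 : ν.map T = ν.withDensity (fun x => ENNReal.ofReal (ρ (T' x))⁻¹) := by
    have hg : (fun x => ENNReal.ofReal (ρ (T' x))⁻¹) = fun x => (ρ' (T' x))⁻¹ := by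
      funext x
      rw [hρ', ENNReal.ofReal_inv_of_pos (hρpos (T' x))]
    have hgmeas : Measurable fun x => (ρ' (T' x))⁻¹ := (hρ'meas.comp hT').inv
    have hwdmap : (μ.map T).withDensity (fun x => (ρ' (T' x))⁻¹)
        = (μ.withDensity fun x => (ρ' (T' (T x)))⁻¹).map T := by
      refine Measure.ext fun s hs => ?_
      rw [withDensity_apply _ hs, setLIntegral_map hs hgmeas hT,
        Measure.map_apply hT hs, withDensity_apply _ (hT hs)]
    have hcongr : (μ.withDensity fun x => (ρ' (T' (T x)))⁻¹)
        = μ.withDensity fun x => (ρ' x)⁻¹ := by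
      refine withDensity_congr_ae ?_
      filter_upwards [goal2μ] with x hx
      rw [hx]
    have hinv : (μ.withDensity fun x => (ρ' x)⁻¹) = ν :=
      withDensity_inv_same hρ'meas
        (Filter.Eventually.of_forall fun x => by exact (ENNReal.ofReal_pos.mpr (hρpos x)).ne')
        (Filter.Eventually.of_forall fun x => by simp [hρ'])
    have h1 : ν.withDensity (fun x => (ρ' (T' x))⁻¹)
        = (μ.map T).withDensity (fun x => (ρ' (T' x))⁻¹) := by rw [hB]
    have hfinal : ν.withDensity (fun x => (ρ' (T' x))⁻¹) = ν.map T := by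
      rw [h1, hwdmap, hcongr, hinv]
    rw [hg]
    exact hfinal.symm
  exact ⟨goal1, goal2, by rw [hA], goal4⟩
end

section
/- Let Φ_{n,m} ≥ 0 be measurable functions on a finite measure space (M,ν), bounded by D², and δ_{n,m} > 0 with δ_{n,m} → 0 as n,m → ∞. Suppose sup_{n,m} ∫_M log(Φ_{n,m}/δ_{n,m} + 1) dν ≤ C₀. Then lim_{n,m→∞} ∫_M Φ_{n,m} dν = 0. -/
open MeasureTheory Filter Topology

lemma key_pointwise (R d D φ : ℝ) (hR : 0 < R) (hd : 0 < d)
    (h0 : 0 ≤ φ) (hD : φ ≤ D ^ 2) :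
    φ ≤ D ^ 2 / R * Real.log (φ / d + 1) + d * (Real.exp R - 1) := by
  have hlog0 : 0 ≤ Real.log (φ / d + 1) := by
    apply Real.log_nonneg
    have : 0 ≤ φ / d := div_nonneg h0 hd.le
    linarith
  have hDR : 0 ≤ D ^ 2 / R := div_nonneg (sq_nonneg D) hR.le
  by_cases h : φ ≤ d * (Real.exp R - 1)
  · nlinarith [mul_nonneg hDR hlog0]
  · push_neg at h
    have h1 : Real.exp R < φ / d + 1 := by
      have hh : Real.exp R - 1 < φ / d := by
        rw [lt_div_iff₀ hd]; nlinarith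
      linarith
    have h2 : R ≤ Real.log (φ / d + 1) := by
      calc R = Real.log (Real.exp R) := (Real.log_exp R).symm
        _ ≤ Real.log (φ / d + 1) :=
          Real.log_le_log (Real.exp_pos R) h1.le
    have h3 : D ^ 2 ≤ D ^ 2 / R * Real.log (φ / d + 1) := by
      have := mul_le_mul_of_nonneg_left h2 hDR
      rw [div_mul_cancel₀] at this
      · exact this
      · exact hR.ne'
    have h4 : 0 ≤ d * (Real.exp R - 1) := by
      have : (1:ℝ) ≤ Real.exp R := Real.one_le_exp hR.le
      nlinarith
    linarith

/-- Cauchy-sequence argument: if `0 ≤ Φ_{n,m} ≤ D²`, `δ_{n,m} → 0` and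
`sup_{n,m} ∫ log(Φ_{n,m}/δ_{n,m} + 1) dν ≤ C₀`, then `∫ Φ_{n,m} dν → 0` as `n,m → ∞`. -/
theorem log_estimate_implies_L1_convergence {M : Type*} [MeasurableSpace M]
    (ν : Measure M) [IsFiniteMeasure ν]
    (Φ : ℕ → ℕ → M → ℝ) (hΦmeas : ∀ n m, Measurable (Φ n m))
    (D : ℝ)
    (hΦ0 : ∀ n m x, 0 ≤ Φ n m x) (hΦD : ∀ n m x, Φ n m x ≤ D ^ 2)
    (δ : ℕ → ℕ → ℝ) (hδpos : ∀ n m, 0 < δ n m)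
    (hδ0 : Tendsto (fun p : ℕ × ℕ => δ p.1 p.2) atTop (𝓝 0))
    (C₀ : ℝ)
    (hlog : ∀ n m, ∫ x, Real.log (Φ n m x / δ n m + 1) ∂ν ≤ C₀) :
    Tendsto (fun p : ℕ × ℕ => ∫ x, Φ p.1 p.2 x ∂ν) atTop (𝓝 0) := by
  -- integrability facts
  have hΦint : ∀ n m, Integrable (Φ n m) ν := by
    intro n m
    refine ⟨(hΦmeas n m).aestronglyMeasurable, ?_⟩
    apply HasFiniteIntegral.of_bounded (C := D ^ 2)
    filter_upwards with x
    rw [Real.norm_eq_abs, abs_of_nonneg (hΦ0 n m x)]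
    exact hΦD n m x
  have hlogmeas : ∀ n m, Measurable (fun x => Real.log (Φ n m x / δ n m + 1)) :=
    fun n m => (((hΦmeas n m).div_const _).add_const 1).log
  have hlogint : ∀ n m, Integrable (fun x => Real.log (Φ n m x / δ n m + 1)) ν := by
    intro n m
    refine ⟨(hlogmeas n m).aestronglyMeasurable, ?_⟩
    apply HasFiniteIntegral.of_bounded (C := Real.log (D ^ 2 / δ n m + 1))
    filter_upwards with x
    have h1 : (0:ℝ) ≤ Φ n m x / δ n m := div_nonneg (hΦ0 n m x) (hδpos n m).le
    have h2 : Φ n m x / δ n m ≤ D ^ 2 / δ n m := by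
      gcongr
      · exact (hδpos n m).le
      · exact hΦD n m x
    rw [Real.norm_eq_abs, abs_of_nonneg (Real.log_nonneg (by linarith))]
    exact Real.log_le_log (by linarith) (by linarith)
  have hlognn : ∀ n m, 0 ≤ ∫ x, Real.log (Φ n m x / δ n m + 1) ∂ν := by
    intro n m
    apply integral_nonneg
    intro x
    have h1 : (0:ℝ) ≤ Φ n m x / δ n m := div_nonneg (hΦ0 n m x) (hδpos n m).le
    exact Real.log_nonneg (by linarith)
  have hC₀ : 0 ≤ C₀ := le_trans (hlognn 0 0) (hlog 0 0)
  have hD2 : 0 ≤ D ^ 2 := sq_nonneg D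
  rw [Metric.tendsto_nhds]
  intro ε hε
  -- choose R
  set A : ℝ := D ^ 2 * C₀ with hA
  have hA0 : 0 ≤ A := mul_nonneg hD2 hC₀
  set R : ℝ := 2 * A / ε + 1 with hRdef
  have hR : 0 < R := by positivity
  have hAR : A / R < ε / 2 := by
    rw [div_lt_iff₀ hR, hRdef]
    have hcalc : ε / 2 * (2 * A / ε + 1) = A + ε / 2 := by
      field_simp
    rw [hcalc]
    linarith
  set K : ℝ := (Real.exp R - 1) * (ν Set.univ).toReal with hK
  have hK0 : 0 ≤ K := by
    have : (1:ℝ) ≤ Real.exp R := Real.one_le_exp hR.le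
    have := ENNReal.toReal_nonneg (a := ν Set.univ)
    nlinarith
  have hδsmall : ∀ᶠ p : ℕ × ℕ in atTop, δ p.1 p.2 * K < ε / 2 := by
    have := Metric.tendsto_nhds.mp hδ0 (ε / 2 / (K + 1)) (by positivity)
    filter_upwards [this] with p hp
    rw [Real.dist_eq, sub_zero, abs_of_pos (hδpos p.1 p.2)] at hp
    have h1 : δ p.1 p.2 * K ≤ δ p.1 p.2 * (K + 1) := by
      nlinarith [(hδpos p.1 p.2).le]
    have h2 : δ p.1 p.2 * (K + 1) < ε / 2 / (K + 1) * (K + 1) := by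
      apply mul_lt_mul_of_pos_right hp
      linarith
    rw [div_mul_cancel₀] at h2
    · linarith
    · positivity
  filter_upwards [hδsmall] with p hp
  rw [Real.dist_eq, sub_zero,
    abs_of_nonneg (integral_nonneg (fun x => hΦ0 p.1 p.2 x))]
  -- main estimate
  have key : ∫ x, Φ p.1 p.2 x ∂ν ≤
      D ^ 2 / R * (∫ x, Real.log (Φ p.1 p.2 x / δ p.1 p.2 + 1) ∂ν)
        + δ p.1 p.2 * K := by
    have hint1 : Integrable
        (fun x => D ^ 2 / R * Real.log (Φ p.1 p.2 x / δ p.1 p.2 + 1)) ν :=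
      (hlogint p.1 p.2).const_mul _
    have hint2 : Integrable
        (fun _ : M => δ p.1 p.2 * (Real.exp R - 1)) ν := integrable_const _
    calc ∫ x, Φ p.1 p.2 x ∂ν
        ≤ ∫ x, (D ^ 2 / R * Real.log (Φ p.1 p.2 x / δ p.1 p.2 + 1)
            + δ p.1 p.2 * (Real.exp R - 1)) ∂ν := by
          apply integral_mono (hΦint p.1 p.2) (hint1.add hint2)
          intro x
          exact key_pointwise R (δ p.1 p.2) D (Φ p.1 p.2 x) hR (hδpos p.1 p.2)
            (hΦ0 p.1 p.2 x) (hΦD p.1 p.2 x)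
      _ = D ^ 2 / R * (∫ x, Real.log (Φ p.1 p.2 x / δ p.1 p.2 + 1) ∂ν)
            + δ p.1 p.2 * K := by
          rw [integral_add hint1 hint2, integral_const_mul, integral_const,
            smul_eq_mul, hK, Measure.real]
          ring
  have h2 : D ^ 2 / R * (∫ x, Real.log (Φ p.1 p.2 x / δ p.1 p.2 + 1) ∂ν)
      ≤ A / R := by
    rw [hA, mul_comm (D ^ 2) C₀, mul_div_assoc]
    rw [mul_comm]
    exact mul_le_mul_of_nonneg_right (hlog p.1 p.2) (div_nonneg hD2 hR.le)
  linarith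
end
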